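/- arXiv:2103.11839 — 3 statements merged into one kernel-verified Lean document; each statement's English description precedes it below -/
import Mathlib

section
/- Let p ≥ 1 and m ≥ 0 be integers and let x be a real number with 0 ≤ x < 1. Then ∫₀ˣ t^m Li_p(t) dt = Σ_{j=2}^{p} ((−1)^{p−j}/(m+1)^{p+1−j})·x^{m+1}·Li_j(x) + ((−1)^{p−1}/(m+1)^{p−1})·( Σ_{j=0}^{m} C(m,j)·(−1)^j/(j+1)^2 + Σ_{j=0}^{m} C(m,j)·(−1)^j·((1−x)^{j+1}/(j+1))·Σ_{i=0}^{1} ((2−i)_i/(j+1)^i)·(−1)^i·log^{1−i}(1−x) ), where C(m,j) is a binomial coefficient. -/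
/-- `Li p x = ∑_{n≥1} x^n / n^p`, the polylogarithm. -/
noncomputable def Li (p : ℕ) (x : ℝ) : ℝ := ∑' n : ℕ, x ^ (n + 1) / (n + 1 : ℝ) ^ p

/-- Pochhammer symbol `(t)_k = t(t+1)⋯(t+k-1)`. -/
noncomputable def poch (t : ℝ) (k : ℕ) : ℝ := ∏ i ∈ Finset.range k, (t + i)

open Finset MeasureTheory intervalIntegral Real

lemma summable_f (p : ℕ) {x : ℝ} (hx0 : 0 ≤ x) (hx1 : x < 1) :
    Summable fun n : ℕ => x ^ (n + 1) / ((n : ℝ) + 1) ^ p := by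
  apply Summable.of_nonneg_of_le (fun n => by positivity) (fun n => ?_)
    (summable_geometric_of_lt_one hx0 hx1)
  have hc : (0:ℝ) ≤ (n:ℝ) := Nat.cast_nonneg n
  calc x ^ (n + 1) / ((n : ℝ) + 1) ^ p ≤ x ^ (n + 1) / 1 :=
        div_le_div_of_nonneg_left (by positivity) one_pos (one_le_pow₀ (by linarith))
    _ = x ^ n * x := by rw [div_one, pow_succ]
    _ ≤ x ^ n * 1 := by nlinarith [pow_nonneg hx0 n]
    _ = x ^ n := by ring

lemma summable_g (m p : ℕ) {x : ℝ} (hx0 : 0 ≤ x) (hx1 : x < 1) :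
    Summable fun n : ℕ => x ^ (m + n + 2) / (((m : ℝ) + n + 2) * ((n : ℝ) + 1) ^ p) := by
  apply Summable.of_nonneg_of_le (fun n => by positivity) (fun n => ?_)
    (summable_geometric_of_lt_one hx0 hx1)
  have hcn : (0:ℝ) ≤ (n:ℝ) := Nat.cast_nonneg n
  have hcm : (0:ℝ) ≤ (m:ℝ) := Nat.cast_nonneg m
  calc x ^ (m + n + 2) / (((m : ℝ) + n + 2) * ((n : ℝ) + 1) ^ p)
      ≤ x ^ (m + n + 2) / 1 := by
        apply div_le_div_of_nonneg_left (by positivity) one_pos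
        have h2 : (1:ℝ) ≤ ((n : ℝ) + 1) ^ p := one_le_pow₀ (by linarith)
        nlinarith
    _ = x ^ n * x ^ (m + 2) := by rw [div_one]; ring
    _ ≤ x ^ n * 1 := by
        have := pow_le_one₀ hx0 hx1.le (n := m + 2)
        nlinarith [pow_nonneg hx0 n, pow_nonneg hx0 (m+2)]
    _ = x ^ n := by ring

lemma base_int (p m n : ℕ) (x : ℝ) :
    (∫ t in (0:ℝ)..x, t ^ m * (t ^ (n + 1) / ((n : ℝ) + 1) ^ p))
      = x ^ (m + n + 2) / (((m : ℝ) + n + 2) * ((n : ℝ) + 1) ^ p) := by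
  have h : ∀ t : ℝ, t ^ m * (t ^ (n + 1) / ((n : ℝ) + 1) ^ p)
      = (((n : ℝ) + 1) ^ p)⁻¹ * t ^ (m + n + 1) := by
    intro t; rw [pow_add]; ring
  simp_rw [h]
  rw [intervalIntegral.integral_const_mul, integral_pow]
  have h1 : ((m:ℝ) + n + 2) ≠ 0 := by positivity
  have h2 : ((n:ℝ) + 1) ^ p ≠ 0 := by positivity
  rw [zero_pow (by omega : m + n + 1 + 1 ≠ 0)]
  push_cast
  rw [show m + n + 1 + 1 = m + n + 2 from rfl]
  field_simp
  push_cast; ring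

lemma interchange (p m : ℕ) {x : ℝ} (hx0 : 0 ≤ x) (hx1 : x < 1) :
    (∫ t in (0:ℝ)..x, t ^ m * Li p t)
      = ∑' n : ℕ, x ^ (m + n + 2) / (((m : ℝ) + n + 2) * ((n : ℝ) + 1) ^ p) := by
  set F : ℕ → ℝ → ℝ := fun n t => t ^ m * (t ^ (n + 1) / ((n : ℝ) + 1) ^ p) with hF
  have hcont : ∀ n, Continuous (F n) := by
    intro n; exact (continuous_pow m).mul ((continuous_pow (n+1)).div_const _)
  have hint : ∀ n, Integrable (F n) (volume.restrict (Set.Ioc (0:ℝ) x)) :=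
    fun n => (hcont n).integrableOn_Ioc
  have hnormint : ∀ n, (∫ t in Set.Ioc (0:ℝ) x, ‖F n t‖)
      = x ^ (m + n + 2) / (((m : ℝ) + n + 2) * ((n : ℝ) + 1) ^ p) := by
    intro n
    rw [setIntegral_congr_fun measurableSet_Ioc (g := F n) (fun t ht => by
      simp only [hF, Real.norm_eq_abs]
      rw [abs_of_nonneg]
      have := ht.1.le
      positivity)]
    rw [← intervalIntegral.integral_of_le hx0, base_int]
  have hsum : Summable fun n => ∫ t in Set.Ioc (0:ℝ) x, ‖F n t‖ := by
    simp_rw [hnormint]; exact summable_g m p hx0 hx1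
  have key := MeasureTheory.integral_tsum_of_summable_integral_norm hint hsum
  have hLi : ∀ t : ℝ, t ^ m * Li p t = ∑' n : ℕ, F n t := by
    intro t
    rw [Li, ← tsum_mul_left]
  rw [intervalIntegral.integral_of_le hx0]
  simp_rw [hLi]
  rw [← key]
  congr 1
  funext n
  rw [← intervalIntegral.integral_of_le hx0, base_int]

lemma S_rec (m p : ℕ) {x : ℝ} (hx0 : 0 ≤ x) (hx1 : x < 1) :
    (∑' n : ℕ, x ^ (m + n + 2) / (((m : ℝ) + n + 2) * ((n : ℝ) + 1) ^ (p + 1)))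
      = x ^ (m + 1) / ((m : ℝ) + 1) * Li (p + 1) x
        - (1 / ((m : ℝ) + 1)) * ∑' n : ℕ, x ^ (m + n + 2) / (((m : ℝ) + n + 2) * ((n : ℝ) + 1) ^ p) := by
  have h1 := (summable_f (p + 1) hx0 hx1).mul_left (x ^ (m + 1) / ((m : ℝ) + 1))
  have h2 := (summable_g m p hx0 hx1).mul_left (1 / ((m : ℝ) + 1))
  have hterm : ∀ n : ℕ,
      x ^ (m + n + 2) / (((m : ℝ) + n + 2) * ((n : ℝ) + 1) ^ (p + 1))
        = x ^ (m + 1) / ((m : ℝ) + 1) * (x ^ (n + 1) / ((n : ℝ) + 1) ^ (p + 1))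
          - (1 / ((m : ℝ) + 1)) * (x ^ (m + n + 2) / (((m : ℝ) + n + 2) * ((n : ℝ) + 1) ^ p)) := by
    intro n
    have e1 : ((m : ℝ) + 1) ≠ 0 := by positivity
    have e2 : ((m : ℝ) + n + 2) ≠ 0 := by positivity
    have e3 : ((n : ℝ) + 1) ≠ 0 := by positivity
    have hx : x ^ (m + n + 2) = x ^ (m + 1) * x ^ (n + 1) := by rw [← pow_add]; ring_nf
    rw [hx]
    field_simp
    ring
  rw [tsum_congr hterm, Summable.tsum_sub h1 h2, tsum_mul_left, tsum_mul_left, Li]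

lemma S_closed (p m : ℕ) (hp : 1 ≤ p) {x : ℝ} (hx0 : 0 ≤ x) (hx1 : x < 1) :
    (∑' n : ℕ, x ^ (m + n + 2) / (((m : ℝ) + n + 2) * ((n : ℝ) + 1) ^ p))
      = (∑ j ∈ Finset.Icc 2 p, ((-1 : ℝ) ^ (p - j) / ((m : ℝ) + 1) ^ (p + 1 - j))
          * x ^ (m + 1) * Li j x)
        + ((-1 : ℝ) ^ (p - 1) / ((m : ℝ) + 1) ^ (p - 1))
          * ∑' n : ℕ, x ^ (m + n + 2) / (((m : ℝ) + n + 2) * ((n : ℝ) + 1) ^ 1) := by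
  induction p, hp using Nat.le_induction with
  | base => simp
  | succ p hp ih =>
    rw [S_rec m p hx0 hx1, ih]
    rw [Finset.sum_Icc_succ_top (by omega : 2 ≤ p + 1)]
    have hc1 : ((-1 : ℝ) ^ (p + 1 - 1) / ((m : ℝ) + 1) ^ (p + 1 - 1))
        = -(1 / ((m : ℝ) + 1)) * ((-1 : ℝ) ^ (p - 1) / ((m : ℝ) + 1) ^ (p - 1)) := by
      have h1 : p + 1 - 1 = (p - 1) + 1 := by omega
      rw [h1, pow_succ, pow_succ]
      field_simp
    have htop : ((-1 : ℝ) ^ (p + 1 - (p + 1)) / ((m : ℝ) + 1) ^ (p + 1 + 1 - (p + 1)))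
        * x ^ (m + 1) * Li (p + 1) x
        = x ^ (m + 1) / ((m : ℝ) + 1) * Li (p + 1) x := by
      rw [Nat.sub_self, show p + 1 + 1 - (p + 1) = 1 from by omega]
      field_simp
    have hsum : (∑ j ∈ Finset.Icc 2 p, ((-1 : ℝ) ^ (p + 1 - j) / ((m : ℝ) + 1) ^ (p + 1 + 1 - j))
          * x ^ (m + 1) * Li j x)
        = -(1 / ((m : ℝ) + 1)) * ∑ j ∈ Finset.Icc 2 p,
            ((-1 : ℝ) ^ (p - j) / ((m : ℝ) + 1) ^ (p + 1 - j)) * x ^ (m + 1) * Li j x := by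
      rw [Finset.mul_sum]
      refine Finset.sum_congr rfl (fun j hj => ?_)
      obtain ⟨hj2, hjp⟩ := Finset.mem_Icc.mp hj
      have e1 : ((m : ℝ) + 1) ≠ 0 := by positivity
      have hco : ((-1 : ℝ) ^ (p + 1 - j) / ((m : ℝ) + 1) ^ (p + 1 + 1 - j))
          = -(1 / ((m : ℝ) + 1)) * ((-1 : ℝ) ^ (p - j) / ((m : ℝ) + 1) ^ (p + 1 - j)) := by
        rw [show p + 1 - j = (p - j) + 1 from by omega,
            show p + 1 + 1 - j = ((p - j) + 1) + 1 from by omega, pow_succ, pow_succ, pow_succ]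
        field_simp
      rw [hco]
      ring
    rw [htop, hsum, hc1]
    ring

lemma Li_one_eq {t : ℝ} (h : |t| < 1) : Li 1 t = -Real.log (1 - t) := by
  rw [Li]
  have := (Real.hasSum_pow_div_log_of_abs_lt_one h).tsum_eq
  simpa [pow_one] using this

lemma innerSumEq (j : ℕ) (x : ℝ) :
    (∑ i ∈ Finset.range 2, (poch (2 - (i : ℝ)) i / ((j : ℝ) + 1) ^ i)
        * (-1 : ℝ) ^ i * (Real.log (1 - x)) ^ (1 - i))
      = Real.log (1 - x) - 1 / ((j : ℝ) + 1) := by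
  rw [Finset.sum_range_succ, Finset.sum_range_succ, Finset.sum_range_zero]
  simp [poch]
  ring

lemma int_piece (j : ℕ) {x : ℝ} (hx0 : 0 ≤ x) (hx1 : x < 1) :
    (∫ t in (0:ℝ)..x, (1 - t) ^ j * (-Real.log (1 - t)))
      = (1 - x) ^ (j + 1) * (Real.log (1 - x) / ((j : ℝ) + 1) - 1 / ((j : ℝ) + 1) ^ 2)
        + 1 / ((j : ℝ) + 1) ^ 2 := by
  have huIcc : Set.uIcc (0:ℝ) x = Set.Icc 0 x := Set.uIcc_of_le hx0
  set F : ℝ → ℝ := fun t => (1 - t) ^ (j + 1)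
      * (Real.log (1 - t) / ((j : ℝ) + 1) - 1 / ((j : ℝ) + 1) ^ 2) with hFdef
  have hderiv : ∀ t ∈ Set.uIcc (0:ℝ) x, HasDerivAt F ((1 - t) ^ j * (-Real.log (1 - t))) t := by
    intro t ht
    rw [huIcc] at ht
    have ht1 : t < 1 := lt_of_le_of_lt ht.2 hx1
    have h1t : (1:ℝ) - t ≠ 0 := by linarith
    have h1tpos : (0:ℝ) < 1 - t := by linarith
    have hu : HasDerivAt (fun t : ℝ => 1 - t) (-1) t := by
      simpa using (hasDerivAt_id t).const_sub 1
    have hpow : HasDerivAt (fun t : ℝ => (1 - t) ^ (j + 1))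
        (((j:ℝ) + 1) * (1 - t) ^ j * (-1)) t := by
      have := hu.fun_pow (j + 1)
      simpa using this
    have hlog : HasDerivAt (fun t : ℝ => Real.log (1 - t)) ((1 - t)⁻¹ * (-1)) t :=
      (Real.hasDerivAt_log h1t).comp t hu
    have hinner : HasDerivAt
        (fun t : ℝ => Real.log (1 - t) / ((j : ℝ) + 1) - 1 / ((j : ℝ) + 1) ^ 2)
        ((1 - t)⁻¹ * (-1) / ((j : ℝ) + 1)) t := (hlog.div_const _).sub_const _
    have := hpow.fun_mul hinner
    refine this.congr_deriv ?_
    have hps : (1 - t) ^ (j + 1) = (1 - t) * (1 - t) ^ j := by rw [pow_succ]; ring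
    rw [hps]
    have hj : ((j:ℝ) + 1) ≠ 0 := by positivity
    field_simp
    ring
  have hcont : IntervalIntegrable (fun t => (1 - t) ^ j * (-Real.log (1 - t))) volume 0 x := by
    apply ContinuousOn.intervalIntegrable
    rw [huIcc]
    apply ContinuousOn.mul
    · exact (continuousOn_const.sub continuousOn_id).pow j
    · apply ContinuousOn.neg
      apply ContinuousOn.log (continuousOn_const.sub continuousOn_id)
      intro t ht
      have : t < 1 := lt_of_le_of_lt ht.2 hx1
      intro h; simp at h; linarith
  rw [intervalIntegral.integral_eq_sub_of_hasDerivAt hderiv hcont]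
  simp only [hFdef]
  rw [sub_zero, one_pow, Real.log_one]
  ring

lemma S1_eq (m : ℕ) {x : ℝ} (hx0 : 0 ≤ x) (hx1 : x < 1) :
    (∑' n : ℕ, x ^ (m + n + 2) / (((m : ℝ) + n + 2) * ((n : ℝ) + 1) ^ 1))
      = (∑ j ∈ Finset.range (m + 1), (m.choose j : ℝ) * (-1 : ℝ) ^ j / ((j : ℝ) + 1) ^ 2)
        + ∑ j ∈ Finset.range (m + 1), (m.choose j : ℝ) * (-1 : ℝ) ^ j
            * ((1 - x) ^ (j + 1) / ((j : ℝ) + 1))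
            * ∑ i ∈ Finset.range 2, (poch (2 - (i : ℝ)) i / ((j : ℝ) + 1) ^ i)
                * (-1 : ℝ) ^ i * (Real.log (1 - x)) ^ (1 - i) := by
  rw [← interchange 1 m hx0 hx1]
  have hcongr : ∀ t ∈ Set.uIcc (0:ℝ) x, t ^ m * Li 1 t
      = ∑ j ∈ Finset.range (m + 1),
          ((m.choose j : ℝ) * (-1 : ℝ) ^ j) * ((1 - t) ^ j * (-Real.log (1 - t))) := by
    intro t ht
    rw [Set.uIcc_of_le hx0] at ht
    have habs : |t| < 1 := by
      rw [abs_of_nonneg ht.1]; exact lt_of_le_of_lt ht.2 hx1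
    rw [Li_one_eq habs]
    have hexp : t ^ m = ∑ j ∈ Finset.range (m + 1),
        ((m.choose j : ℝ) * (-1 : ℝ) ^ j) * (1 - t) ^ j := by
      have := add_pow (-(1 - t)) 1 m
      simp only [neg_add_cancel, one_pow, mul_one] at this
      rw [show t = -(1 - t) + 1 from by ring, this]
      refine Finset.sum_congr rfl (fun j hj => ?_)
      rw [neg_pow]
      ring
    rw [hexp, Finset.sum_mul]
    refine Finset.sum_congr rfl (fun j hj => ?_)
    ring
  rw [intervalIntegral.integral_congr hcongr]
  have hint : ∀ j ∈ Finset.range (m + 1), IntervalIntegrable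
      (fun t => ((m.choose j : ℝ) * (-1 : ℝ) ^ j) * ((1 - t) ^ j * (-Real.log (1 - t))))
      volume 0 x := by
    intro j _
    apply ContinuousOn.intervalIntegrable
    apply ContinuousOn.mul continuousOn_const
    rw [Set.uIcc_of_le hx0]
    apply ContinuousOn.mul
    · exact (continuousOn_const.sub continuousOn_id).pow j
    · apply ContinuousOn.neg
      apply ContinuousOn.log (continuousOn_const.sub continuousOn_id)
      intro t ht
      have : t < 1 := lt_of_le_of_lt ht.2 hx1
      intro h; simp at h; linarith
  rw [intervalIntegral.integral_finset_sum hint]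
  have heach : ∀ j ∈ Finset.range (m + 1),
      (∫ t in (0:ℝ)..x, ((m.choose j : ℝ) * (-1 : ℝ) ^ j) * ((1 - t) ^ j * (-Real.log (1 - t))))
        = ((m.choose j : ℝ) * (-1 : ℝ) ^ j) *
          ((1 - x) ^ (j + 1) * (Real.log (1 - x) / ((j : ℝ) + 1) - 1 / ((j : ℝ) + 1) ^ 2)
            + 1 / ((j : ℝ) + 1) ^ 2) := by
    intro j _
    rw [intervalIntegral.integral_const_mul, int_piece j hx0 hx1]
  rw [Finset.sum_congr rfl heach]
  rw [← Finset.sum_add_distrib]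
  refine Finset.sum_congr rfl (fun j hj => ?_)
  rw [innerSumEq]
  have hj : ((j:ℝ) + 1) ≠ 0 := by positivity
  field_simp
  ring

theorem stmt9 (p m : ℕ) (hp : 1 ≤ p) (x : ℝ) (hx0 : 0 ≤ x) (hx1 : x < 1) :
    (∫ t in (0:ℝ)..x, t ^ m * Li p t) =
      (∑ j ∈ Finset.Icc 2 p, ((-1 : ℝ) ^ (p - j) / ((m : ℝ) + 1) ^ (p + 1 - j))
        * x ^ (m + 1) * Li j x)
      + ((-1 : ℝ) ^ (p - 1) / ((m : ℝ) + 1) ^ (p - 1))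
        * ((∑ j ∈ Finset.range (m + 1), (m.choose j : ℝ) * (-1 : ℝ) ^ j / ((j : ℝ) + 1) ^ 2)
          + ∑ j ∈ Finset.range (m + 1), (m.choose j : ℝ) * (-1 : ℝ) ^ j
              * ((1 - x) ^ (j + 1) / ((j : ℝ) + 1))
              * ∑ i ∈ Finset.range 2, (poch (2 - (i : ℝ)) i / ((j : ℝ) + 1) ^ i)
                  * (-1 : ℝ) ^ i * (Real.log (1 - x)) ^ (1 - i)) := by
  rw [interchange p m hx0 hx1, S_closed p m hp hx0 hx1, S1_eq m hx0 hx1]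
end

section
/- Let a < b be real numbers and let (u_n)_{n≥1} be a sequence of functions on [a,b] with u_n(x) ≥ 0 for all n and all x ∈ [a,b], such that: each u_n is integrable on [a,b]; the series Σ_{n=1}^∞ u_n(x) converges for every x with a ≤ x < b and Σ_{n=1}^∞ u_n(b) = ∞; the improper integral ∫_a^b Σ_{n=1}^∞ u_n(x) dx converges; and Σ_{n=1}^∞ u_n converges uniformly on every closed subinterval [c,d] with a ≤ c < d < b. Then ∫_a^b Σ_{n=1}^∞ u_n(x) dx = Σ_{n=1}^∞ ∫_a^b u_n(x) dx. -/
open Filter MeasureTheory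

theorem stmt13 (a b : ℝ) (hab : a < b) (u : ℕ → ℝ → ℝ) (I : ℝ)
    (hnonneg : ∀ n, ∀ x ∈ Set.Icc a b, 0 ≤ u n x)
    (hint : ∀ n, IntervalIntegrable (u n) volume a b)
    (hconv : ∀ x, a ≤ x → x < b → Summable (fun n => u n x))
    (hdivb : ¬ Summable (fun n => u n b))
    (himp : Tendsto (fun d => ∫ x in a..d, ∑' n, u n x) (nhdsWithin b (Set.Iio b)) (nhds I))
    (hunif : ∀ c d, a ≤ c → c < d → d < b →
      TendstoUniformlyOn (fun N x => ∑ n ∈ Finset.range N, u n x)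
        (fun x => ∑' n, u n x) atTop (Set.Icc c d)) :
    I = ∑' n, ∫ x in a..b, u n x := by
  set f : ℝ → ℝ := fun x => ∑' n, u n x with hf
  set S : ℕ → ℝ → ℝ := fun N x => ∑ n ∈ Finset.range N, u n x with hS
  -- basic facts
  have hfnonneg : ∀ x ∈ Set.Icc a b, 0 ≤ f x := fun x hx =>
    tsum_nonneg fun n => hnonneg n x hx
  have hSnonneg : ∀ N, ∀ x ∈ Set.Icc a b, 0 ≤ S N x := fun N x hx =>
    Finset.sum_nonneg fun n _ => hnonneg n x hx
  have hSint : ∀ N c d, c ∈ Set.Icc a b → d ∈ Set.Icc a b →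
      IntervalIntegrable (S N) volume c d := by
    intro N c d hc hd
    have h : IntervalIntegrable (∑ n ∈ Finset.range N, u n) volume c d :=
      IntervalIntegrable.sum _ fun n _ =>
        (hint n).mono_set (Set.uIcc_subset_uIcc
          (by rw [Set.uIcc_of_le hab.le]; exact hc) (by rw [Set.uIcc_of_le hab.le]; exact hd))
    have heq : S N = ∑ n ∈ Finset.range N, u n := by
      funext x; simp [S, Finset.sum_apply]
    rw [heq]; exact h
  have huint : ∀ n c d, c ∈ Set.Icc a b → d ∈ Set.Icc a b →
      IntervalIntegrable (u n) volume c d := fun n c d hc hd =>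
    (hint n).mono_set (Set.uIcc_subset_uIcc
      (by rw [Set.uIcc_of_le hab.le]; exact hc) (by rw [Set.uIcc_of_le hab.le]; exact hd))
  have hSlef : ∀ x, a ≤ x → x < b → ∀ N, S N x ≤ f x := fun x hx hx' N =>
    Summable.sum_le_tsum _ (fun n _ => hnonneg n x ⟨hx, hx'.le⟩) (hconv x hx hx')
  -- integrability of f on [a, d] for a < d < b
  have hfint : ∀ d, a < d → d < b → IntervalIntegrable f volume a d := by
    intro d had hdb
    have hu := hunif a d le_rfl had hdb
    obtain ⟨N₀, hN₀⟩ := (Metric.tendstoUniformlyOn_iff.mp hu 1 one_pos).exists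
    have hIoc : Set.Ioc a d ⊆ Set.Icc a b := fun x hx =>
      ⟨hx.1.le, hx.2.trans hdb.le⟩
    rw [intervalIntegrable_iff_integrableOn_Ioc_of_le had.le]
    have hSN : IntegrableOn (S N₀) (Set.Ioc a d) volume := by
      have := hSint N₀ a d ⟨le_rfl, hab.le⟩ ⟨had.le, hdb.le⟩
      rwa [intervalIntegrable_iff_integrableOn_Ioc_of_le had.le] at this
    have hmeas : AEStronglyMeasurable f (volume.restrict (Set.Ioc a d)) := by
      refine aestronglyMeasurable_of_tendsto_ae atTop
        (fun N => (by
          have := hSint N a d ⟨le_rfl, hab.le⟩ ⟨had.le, hdb.le⟩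
          rw [intervalIntegrable_iff_integrableOn_Ioc_of_le had.le] at this
          exact this.aestronglyMeasurable)) ?_
      filter_upwards [ae_restrict_mem measurableSet_Ioc] with x hx
      exact (hconv x hx.1.le (hx.2.trans_lt hdb)).hasSum.tendsto_sum_nat
    refine Integrable.mono' (g := fun x => S N₀ x + 1)
      (hSN.add (integrableOn_const measure_Ioc_lt_top.ne)) hmeas ?_
    filter_upwards [ae_restrict_mem measurableSet_Ioc] with x hx
    have h1 := hN₀ x ⟨hx.1.le, hx.2⟩
    rw [Real.dist_eq, abs_lt] at h1
    rw [Real.norm_eq_abs, abs_of_nonneg (hfnonneg x (hIoc hx))]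
    linarith
  -- key: on [a,d], HasSum of the integrals
  have key : ∀ d, a < d → d < b →
      HasSum (fun n => ∫ x in a..d, u n x) (∫ x in a..d, f x) := by
    intro d had hdb
    have hIoc : Set.uIoc a d ⊆ Set.Icc a b := by
      rw [Set.uIoc_of_le had.le]
      exact fun x hx => ⟨hx.1.le, hx.2.trans hdb.le⟩
    refine intervalIntegral.hasSum_integral_of_dominated_convergence
      (fun n t => u n t) (fun n => ?_) (fun n => ?_) ?_ (hfint d had hdb) ?_
    · have := huint n a d ⟨le_rfl, hab.le⟩ ⟨had.le, hdb.le⟩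
      exact this.def'.aestronglyMeasurable
    · filter_upwards with t ht
      rw [Real.norm_eq_abs, abs_of_nonneg (hnonneg n t (hIoc ht))]
    · filter_upwards with t ht
      rw [Set.uIoc_of_le had.le] at ht
      exact hconv t ht.1.le (ht.2.trans_lt hdb)
    · filter_upwards with t ht
      rw [Set.uIoc_of_le had.le] at ht
      exact (hconv t ht.1.le (ht.2.trans_lt hdb)).hasSum
  -- ∫ a..d f ≤ I for a < d < b
  have hfleI : ∀ d, a < d → d < b → (∫ x in a..d, f x) ≤ I := by
    intro d had hdb
    refine ge_of_tendsto himp ?_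
    have hmem : Set.Ioo d b ∈ nhdsWithin b (Set.Iio b) :=
      mem_nhdsWithin.2 ⟨Set.Ioi d, isOpen_Ioi, hdb, fun x hx => ⟨hx.1, hx.2⟩⟩
    filter_upwards [hmem] with d' hd'
    have had' : a < d' := had.trans hd'.1
    have h1 : (∫ x in a..d, f x) + ∫ x in d..d', f x = ∫ x in a..d', f x :=
      intervalIntegral.integral_add_adjacent_intervals (hfint d had hdb)
        (((hfint d' had' hd'.2).mono_set
          (Set.uIcc_subset_uIcc (by rw [Set.uIcc_of_le had'.le]; exact ⟨had.le, hd'.1.le⟩) (by rw [Set.uIcc_of_le had'.le]; exact ⟨had'.le, le_rfl⟩))))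
    have h2 : 0 ≤ ∫ x in d..d', f x :=
      intervalIntegral.integral_nonneg hd'.1.le fun x hx =>
        hfnonneg x ⟨had.le.trans hx.1, hx.2.trans hd'.2.le⟩
    linarith
  -- Summability of the full integrals and tsum ≤ I
  have hnn : ∀ n, 0 ≤ ∫ x in a..b, u n x := fun n =>
    intervalIntegral.integral_nonneg hab.le (hnonneg n)
  have hbdd : ∀ N, ∑ n ∈ Finset.range N, ∫ x in a..b, u n x ≤ I := by
    intro N
    have heq : ∑ n ∈ Finset.range N, ∫ x in a..b, u n x = ∫ x in a..b, S N x :=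
      (intervalIntegral.integral_finset_sum fun n _ =>
        huint n a b ⟨le_rfl, hab.le⟩ ⟨hab.le, le_rfl⟩).symm
    rw [heq]
    -- continuity of the primitive at b
    have hSint' : IntegrableOn (S N) (Set.uIcc a b) volume := by
      rw [Set.uIcc_of_le hab.le, ← intervalIntegrable_iff_integrableOn_Icc_of_le hab.le]
      exact hSint N a b ⟨le_rfl, hab.le⟩ ⟨hab.le, le_rfl⟩
    have hcont := (intervalIntegral.continuousOn_primitive_interval hSint') b
      (by rw [Set.uIcc_of_le hab.le]; exact ⟨hab.le, le_rfl⟩)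
    have htendsto : Tendsto (fun d => ∫ x in a..d, S N x) (nhdsWithin b (Set.Iio b))
        (nhds (∫ x in a..b, S N x)) := by
      refine hcont.tendsto.mono_left (nhdsWithin_le_of_mem ?_)
      refine mem_nhdsWithin.2 ⟨Set.Ioi a, isOpen_Ioi, hab, fun x hx => ?_⟩
      rw [Set.uIcc_of_le hab.le]
      exact ⟨hx.1.le, hx.2.le⟩
    refine le_of_tendsto htendsto ?_
    have hmem : Set.Ioo a b ∈ nhdsWithin b (Set.Iio b) :=
      mem_nhdsWithin.2 ⟨Set.Ioi a, isOpen_Ioi, hab, fun x hx => ⟨hx.1, hx.2⟩⟩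
    filter_upwards [hmem] with d hd
    have h1 : (∫ x in a..d, S N x) ≤ ∫ x in a..d, f x := by
      refine intervalIntegral.integral_mono_on hd.1.le
        (hSint N a d ⟨le_rfl, hab.le⟩ ⟨hd.1.le, hd.2.le⟩) (hfint d hd.1 hd.2) ?_
      intro x hx
      exact hSlef x hx.1 (hx.2.trans_lt hd.2) N
    exact h1.trans (hfleI d hd.1 hd.2)
  have hsummable : Summable fun n => ∫ x in a..b, u n x :=
    summable_of_sum_range_le hnn hbdd
  have hle1 : ∑' n, (∫ x in a..b, u n x) ≤ I := Summable.tsum_le_of_sum_range_le hsummable hbdd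
  -- I ≤ tsum
  have hle2 : I ≤ ∑' n, ∫ x in a..b, u n x := by
    refine le_of_tendsto himp ?_
    have hmem : Set.Ioo a b ∈ nhdsWithin b (Set.Iio b) :=
      mem_nhdsWithin.2 ⟨Set.Ioi a, isOpen_Ioi, hab, fun x hx => ⟨hx.1, hx.2⟩⟩
    filter_upwards [hmem] with d hd
    have hkey := key d hd.1 hd.2
    have hterm : ∀ n, (∫ x in a..d, u n x) ≤ ∫ x in a..b, u n x := by
      intro n
      have h1 : (∫ x in a..d, u n x) + ∫ x in d..b, u n x = ∫ x in a..b, u n x :=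
        intervalIntegral.integral_add_adjacent_intervals
          (huint n a d ⟨le_rfl, hab.le⟩ ⟨hd.1.le, hd.2.le⟩)
          (huint n d b ⟨hd.1.le, hd.2.le⟩ ⟨hab.le, le_rfl⟩)
      have h2 : 0 ≤ ∫ x in d..b, u n x :=
        intervalIntegral.integral_nonneg hd.2.le fun x hx =>
          hnonneg n x ⟨hd.1.le.trans hx.1, hx.2⟩
      linarith
    calc (∫ x in a..d, f x) = ∑' n, ∫ x in a..d, u n x := hkey.tsum_eq.symm
      _ ≤ ∑' n, ∫ x in a..b, u n x :=
        Summable.tsum_le_tsum hterm hkey.summable hsummable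
  linarith
end

section
/- Let p, q, m be positive integers with p ≥ q. Write K(r,s,t) := ∫₀¹ log^r(x)·Li_s(x)·Li_t(x)/x dx, where Li_0(x) = x/(1−x). Then K(m,p,q) = Σ_{x=1}^{q} K(m+p+x−1, 0, q−x+1)·((−1)^{p+x−1}/(m+1)_{p+x−1})·N_{x−1} + Σ_{i_1=1}^{p} ((−1)^{i_1}/(m+1)_{i_1}) Σ_{i_2=1}^{p−i_1+1} ((−1)^{i_2}/(m+i_1+1)_{i_2}) ⋯ Σ_{i_q=1}^{p−i_1−⋯−i_{q−1}+q−1} ((−1)^{i_q}/(m+i_1+⋯+i_{q−1}+1)_{i_q})·K(m+i_1+⋯+i_q, p−i_1−⋯−i_q+q, 0), where N_{x−1} := Σ_{i_1=1}^{p} Σ_{i_2=1}^{p−i_1+1} ⋯ Σ_{i_{x−1}=1}^{p−i_1−⋯−i_{x−2}+x−2} 1 is the number of (x−1)-tuples of positive integers (i_1,…,i_{x−1}) with i_1+⋯+i_j ≤ p+j−1 for every j (N_0 := 1), the nested sums run over all tuples of positive integers whose partial sums satisfy the indicated upper bounds, and (t)_k := t(t+1)⋯(t+k−1) is the Pochhammer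 symbol. -/
/-- `K r s t = ∫₀¹ log^r(x) · Li_s(x) · Li_t(x) / x dx`. -/
noncomputable def Kint (r s t : ℕ) : ℝ :=
  ∫ x in (0:ℝ)..1, (Real.log x) ^ r * Li s x * Li t x / x

/-- `nest19 y b c f` is the nested sum
`Σ_{i=1}^{b} ((-1)^i/(c+1)_i) · nest19 (y-1) (b-i+1) (c+i) f`, with `nest19 0 b c f = f c`.
With `b = p` and `c = m` this is the nested sum
`Σ_{i_1=1}^{p} ((-1)^{i_1}/(m+1)_{i_1}) Σ_{i_2=1}^{p-i_1+1} ((-1)^{i_2}/(m+i_1+1)_{i_2}) ⋯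
f (m+i_1+⋯+i_y)` over `y`-tuples of positive integers whose partial sums satisfy
`i_1+⋯+i_j ≤ p+j-1`. -/
noncomputable def nest19 : ℕ → ℕ → ℕ → (ℕ → ℝ) → ℝ
  | 0, _, c, f => f c
  | y + 1, b, c, f => ∑ i ∈ Finset.Icc 1 b,
      ((-1 : ℝ) ^ i / poch ((c : ℝ) + 1) i) * nest19 y (b - i + 1) (c + i) f

/-- `cnt19 y b` is the number of `y`-tuples of positive integers `(i_1, …, i_y)` whose partial
sums satisfy the bounds `i_1 ≤ b`, `i_2 ≤ b - i_1 + 1`, …; `cnt19 0 b = 1` (the empty tuple). -/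
def cnt19 : ℕ → ℕ → ℕ
  | 0, _ => 1
  | y + 1, b => ∑ i ∈ Finset.Icc 1 b, cnt19 y (b - i + 1)

open MeasureTheory Real Set


lemma image_exp_neg : (fun t : ℝ => Real.exp (-t)) '' Set.Ioi 0 = Set.Ioo (0:ℝ) 1 := by
  ext x
  constructor
  · rintro ⟨t, ht, rfl⟩
    have ht' : (0:ℝ) < t := ht
    exact ⟨Real.exp_pos _, Real.exp_lt_one_iff.mpr (by linarith)⟩
  · rintro ⟨hx0, hx1⟩
    refine ⟨-Real.log x, ?_, by simp [Real.exp_log hx0]⟩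
    simpa [mem_Ioi] using Real.log_neg hx0 hx1

lemma exp_neg_injOn : Set.InjOn (fun t : ℝ => Real.exp (-t)) (Set.Ioi 0) :=
  fun a _ b _ hab => neg_injective (Real.exp_injective hab)

lemma exp_neg_deriv : ∀ t ∈ Set.Ioi (0:ℝ),
    HasDerivWithinAt (fun t : ℝ => Real.exp (-t)) (-Real.exp (-t)) (Set.Ioi 0) t :=
  fun t _ => (((hasDerivAt_neg t).exp).congr_deriv (by ring)).hasDerivWithinAt

lemma cov_Ioo (g : ℝ → ℝ) :
    ∫ x in Set.Ioo (0:ℝ) 1, g x = ∫ t in Set.Ioi (0:ℝ), Real.exp (-t) * g (Real.exp (-t)) := by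
  rw [← image_exp_neg, integral_image_eq_integral_abs_deriv_smul measurableSet_Ioi
    exp_neg_deriv exp_neg_injOn g]
  simp [abs_of_pos (Real.exp_pos _), smul_eq_mul]

lemma cov_Ioo_integrable (g : ℝ → ℝ) :
    IntegrableOn g (Set.Ioo (0:ℝ) 1) ↔
      IntegrableOn (fun t => Real.exp (-t) * g (Real.exp (-t))) (Set.Ioi (0:ℝ)) := by
  rw [← image_exp_neg, integrableOn_image_iff_integrableOn_abs_deriv_smul measurableSet_Ioi
    exp_neg_deriv exp_neg_injOn g]
  constructor <;> intro h <;> refine h.congr_fun ?_ measurableSet_Ioi <;>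
    intro t _ <;> simp [abs_of_pos (Real.exp_pos _), smul_eq_mul]

lemma intJ_Ioi (r b : ℕ) :
    ∫ t in Set.Ioi (0:ℝ), t ^ r * Real.exp (-(((b:ℝ)+1) * t)) = (Nat.factorial r : ℝ) / ((b:ℝ)+1)^(r+1) := by
  have hb : (0:ℝ) < (b:ℝ)+1 := by positivity
  have h := Real.integral_rpow_mul_exp_neg_mul_Ioi (a := (r:ℝ)+1) (r := (b:ℝ)+1)
    (by positivity) hb
  rw [show ∫ t in Set.Ioi (0:ℝ), t ^ r * Real.exp (-(((b:ℝ)+1) * t))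
      = ∫ t in Set.Ioi (0:ℝ), t ^ (((r:ℝ)+1)-1) * Real.exp (-(((b:ℝ)+1) * t)) from
    setIntegral_congr_fun measurableSet_Ioi (fun t ht => by
      rw [show ((r:ℝ)+1)-1 = (r:ℝ) by ring, Real.rpow_natCast]), h]
  rw [show ((r:ℝ)+1) = ((r:ℕ):ℝ)+1 by norm_num, Real.Gamma_nat_eq_factorial,
    show (((r:ℕ):ℝ)+1) = (((r+1:ℕ)):ℝ) by push_cast; ring, Real.rpow_natCast]
  rw [one_div, inv_pow, inv_mul_eq_div]

lemma intJ_Ioi_integrable (r b : ℕ) :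
    IntegrableOn (fun t : ℝ => t ^ r * Real.exp (-(((b:ℝ)+1)*t))) (Set.Ioi 0) := by
  have h := integrableOn_rpow_mul_exp_neg_mul_rpow (p := 1) (s := (r:ℝ)) (b := (b:ℝ)+1)
    (lt_of_lt_of_le (by norm_num) (Nat.cast_nonneg r)) one_pos (by positivity)
  refine h.congr_fun (fun t ht => ?_) measurableSet_Ioi
  dsimp only; rw [Real.rpow_natCast, Real.rpow_one, neg_mul]

lemma cov_form (r b : ℕ) : ∀ t ∈ Set.Ioi (0:ℝ),
    Real.exp (-t) * ((-Real.log (Real.exp (-t)))^r * (Real.exp (-t))^b)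
      = t ^ r * Real.exp (-(((b:ℝ)+1)*t)) := by
  intro t _
  rw [Real.log_exp, neg_neg, ← Real.exp_nat_mul]
  rw [show -(((b:ℝ)+1)*t) = -t + (b:ℝ)*(-t) by ring, Real.exp_add]
  ring

lemma intJ (r b : ℕ) :
    ∫ x in Set.Ioo (0:ℝ) 1, (-Real.log x)^r * x^b = (Nat.factorial r : ℝ) / ((b:ℝ)+1)^(r+1) := by
  rw [cov_Ioo, ← intJ_Ioi r b]
  exact setIntegral_congr_fun measurableSet_Ioi (cov_form r b)

lemma intJ_integrable (r b : ℕ) :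
    IntegrableOn (fun x : ℝ => (-Real.log x)^r * x^b) (Set.Ioo (0:ℝ) 1) := by
  rw [cov_Ioo_integrable]
  exact (intJ_Ioi_integrable r b).congr_fun (fun t ht => (cov_form r b t ht).symm) measurableSet_Ioi

noncomputable def Dterm (a s t : ℕ) (nk : ℕ × ℕ) : ℝ :=
  (((nk.1:ℝ) + nk.2 + 2) ^ a * ((nk.1:ℝ) + 1) ^ s * ((nk.2:ℝ) + 1) ^ t)⁻¹

noncomputable def D (a s t : ℕ) : ℝ := ∑' nk : ℕ × ℕ, Dterm a s t nk

lemma sum32 : Summable (fun n : ℕ => (((n:ℝ)+1) ^ (3/2 : ℝ))⁻¹) := by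
  have h0 := Real.summable_one_div_nat_rpow (p := (3/2:ℝ)) |>.mpr (by norm_num)
  have h1 := (summable_nat_add_iff 1).mpr h0
  refine h1.congr fun n => ?_
  push_cast
  rw [one_div]

lemma Dterm_nonneg (a s t : ℕ) (nk : ℕ × ℕ) : 0 ≤ Dterm a s t nk := by
  unfold Dterm; positivity

lemma Dterm_le (a s t : ℕ) (ha : 2 ≤ a) (ht : 1 ≤ t) (nk : ℕ × ℕ) :
    Dterm a s t nk ≤ (((nk.1:ℝ)+1)^(3/2:ℝ))⁻¹ * (((nk.2:ℝ)+1)^(3/2:ℝ))⁻¹ := by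
  obtain ⟨n, k⟩ := nk
  set A : ℝ := (n:ℝ)+1 with hA
  set B : ℝ := (k:ℝ)+1 with hB
  have hA1 : (1:ℝ) ≤ A := by simp [hA]
  have hB1 : (1:ℝ) ≤ B := by simp [hB]
  have hA0 : (0:ℝ) < A := by linarith
  have hB0 : (0:ℝ) < B := by linarith
  have hS : ((n:ℝ) + k + 2) = A + B := by simp [hA, hB]; ring
  have hS1 : (1:ℝ) ≤ A + B := by linarith
  have hS0 : (0:ℝ) < A + B := by linarith
  unfold Dterm
  simp only [hS]
  rw [← mul_inv]
  rw [inv_le_inv₀ (by positivity) (by positivity)]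
  have k1 : A ^ (3/2:ℝ) ≤ (A+B) ^ (3/2:ℝ) :=
    Real.rpow_le_rpow hA0.le (by linarith) (by norm_num)
  have k2 : B ^ (1/2:ℝ) ≤ (A+B) ^ (1/2:ℝ) :=
    Real.rpow_le_rpow hB0.le (by linarith) (by norm_num)
  have k3 : A ^ (3/2:ℝ) * B ^ (1/2:ℝ) ≤ (A+B)^2 := by
    calc A ^ (3/2:ℝ) * B ^ (1/2:ℝ) ≤ (A+B) ^ (3/2:ℝ) * (A+B) ^ (1/2:ℝ) :=
          mul_le_mul k1 k2 (by positivity) (by positivity)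
      _ = (A+B) ^ ((3/2:ℝ)+(1/2:ℝ)) := (Real.rpow_add hS0 _ _).symm
      _ = (A+B) ^ (2:ℝ) := by norm_num
      _ = (A+B) ^ (2:ℕ) := by rw [Real.rpow_two]
  have hBsplit : B ^ (3/2:ℝ) = B ^ (1/2:ℝ) * B := by
    rw [show (3/2:ℝ) = 1/2 + 1 by norm_num, Real.rpow_add hB0, Real.rpow_one]
  calc A ^ (3/2:ℝ) * B ^ (3/2:ℝ) = (A ^ (3/2:ℝ) * B ^ (1/2:ℝ)) * B := by rw [hBsplit]; ring
    _ ≤ (A+B)^2 * B := by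
        exact mul_le_mul_of_nonneg_right k3 hB0.le
    _ ≤ (A+B)^a * (A^s * B^t) := by
        have e1 : (A+B)^2 ≤ (A+B)^a := pow_le_pow_right₀ hS1 ha
        have e2 : B ≤ B^t := by
          calc B = B^1 := (pow_one B).symm
            _ ≤ B^t := pow_le_pow_right₀ hB1 ht
        have e3 : (1:ℝ) ≤ A^s := one_le_pow₀ hA1
        calc (A+B)^2 * B ≤ (A+B)^a * B^t :=
              mul_le_mul e1 e2 hB0.le (by positivity)
          _ ≤ (A+B)^a * (A^s * B^t) :=
              mul_le_mul_of_nonneg_left (le_mul_of_one_le_left (by positivity) e3)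
                (by positivity)
    _ = (A+B)^a * A^s * B^t := by ring

lemma Dsummable_t (a s t : ℕ) (ha : 2 ≤ a) (ht : 1 ≤ t) : Summable (Dterm a s t) := by
  refine Summable.of_nonneg_of_le (Dterm_nonneg a s t) (Dterm_le a s t ha ht) ?_
  exact sum32.mul_of_nonneg sum32 (fun n => by positivity) (fun n => by positivity)

lemma Dsummable (a s t : ℕ) (ha : 2 ≤ a) (hst : 1 ≤ s + t) : Summable (Dterm a s t) := by
  rcases Nat.lt_or_ge t 1 with h | h
  · interval_cases t
    have hs : 1 ≤ s := by omega
    have heq : Dterm a s 0 = (Dterm a 0 s) ∘ (Equiv.prodComm ℕ ℕ) := by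
      funext nk
      unfold Dterm
      simp only [Function.comp_apply, Equiv.prodComm_apply, Prod.fst_swap, Prod.snd_swap,
        pow_zero]
      ring_nf
    rw [heq]
    exact ((Equiv.prodComm ℕ ℕ).summable_iff).mpr (Dsummable_t a 0 s ha hs)
  · exact Dsummable_t a s t ha h

lemma key_alg (a s t : ℕ) (A B : ℝ) (hA : 0 < A) (hB : 0 < B) :
    ((A+B)^a * A^(s+1) * B^(t+1))⁻¹
      = ((A+B)^(a+1) * A^s * B^(t+1))⁻¹ + ((A+B)^(a+1) * A^(s+1) * B^t)⁻¹ := by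
  have hS : (0:ℝ) < A + B := by linarith
  field_simp
  ring

lemma Drec (a s t : ℕ) (ha : 1 ≤ a) :
    D a (s+1) (t+1) = D (a+1) s (t+1) + D (a+1) (s+1) t := by
  unfold D
  rw [← Summable.tsum_add (Dsummable (a+1) s (t+1) (by omega) (by omega))
    (Dsummable (a+1) (s+1) t (by omega) (by omega))]
  congr 1
  funext nk
  obtain ⟨n, k⟩ := nk
  have hS : ((n:ℝ) + k + 2) = ((n:ℝ)+1) + ((k:ℝ)+1) := by ring
  unfold Dterm
  simp only
  rw [hS]
  exact key_alg a s t _ _ (by positivity) (by positivity)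

noncomputable def Fterm (r s t : ℕ) (nk : ℕ × ℕ) (x : ℝ) : ℝ :=
  Real.log x ^ r * x ^ (nk.1+nk.2+1) * (((nk.1:ℝ)+1)^s * ((nk.2:ℝ)+1)^t)⁻¹

lemma li_summable {x : ℝ} (hx : x ∈ Set.Ioo (0:ℝ) 1) (p : ℕ) :
    Summable (fun n : ℕ => ‖x ^ (n+1) / ((n:ℝ)+1)^p‖) := by
  obtain ⟨hx0, hx1⟩ := hx
  refine Summable.of_nonneg_of_le (fun n => norm_nonneg _) (fun n => ?_)
    (summable_geometric_of_lt_one hx0.le hx1)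
  rw [Real.norm_eq_abs, abs_div, abs_of_pos (pow_pos hx0 _), abs_of_pos (by positivity)]
  calc x ^ (n+1) / ((n:ℝ)+1)^p ≤ x ^ (n+1) / 1 := by
        apply div_le_div_of_nonneg_left (by positivity) one_pos ?_ |>.trans ?_
        · exact one_le_pow₀ (by push_cast; linarith [Nat.cast_nonneg (α := ℝ) n])
        · rfl
    _ = x ^ (n+1) := div_one _
    _ ≤ x ^ n := pow_le_pow_of_le_one hx0.le hx1.le (by omega)

lemma pointwise_eq {x : ℝ} (hx : x ∈ Set.Ioo (0:ℝ) 1) (r s t : ℕ) :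
    Real.log x ^ r * Li s x * Li t x / x = ∑' nk : ℕ × ℕ, Fterm r s t nk x := by
  obtain ⟨hx0, hx1⟩ := hx
  have hprod : Li s x * Li t x
      = ∑' nk : ℕ × ℕ, (x ^ (nk.1+1) / ((nk.1:ℝ)+1)^s) * (x ^ (nk.2+1) / ((nk.2:ℝ)+1)^t) := by
    unfold Li
    exact tsum_mul_tsum_of_summable_norm (li_summable ⟨hx0, hx1⟩ s) (li_summable ⟨hx0, hx1⟩ t)
  have h1 : Real.log x ^ r * Li s x * Li t x / x
      = (Real.log x ^ r / x) * (Li s x * Li t x) := by ring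
  rw [h1, hprod, ← tsum_mul_left]
  congr 1
  funext nk
  unfold Fterm
  have hAx : ((nk.1:ℝ)+1)^s ≠ 0 := by positivity
  have hBx : ((nk.2:ℝ)+1)^t ≠ 0 := by positivity
  field_simp
  ring

lemma Fterm_eq (r s t : ℕ) (nk : ℕ × ℕ) :
    Fterm r s t nk = fun x => ((-1:ℝ)^r * (((nk.1:ℝ)+1)^s * ((nk.2:ℝ)+1)^t)⁻¹)
      * ((-Real.log x)^r * x ^ (nk.1+nk.2+1)) := by
  funext x
  unfold Fterm
  have h : (-1:ℝ)^r * (-Real.log x)^r = Real.log x ^ r := by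
    rw [← mul_pow]; ring_nf
  rw [← h]; ring

lemma Fterm_integrable (r s t : ℕ) (nk : ℕ × ℕ) :
    MeasureTheory.IntegrableOn (Fterm r s t nk) (Set.Ioo (0:ℝ) 1) := by
  rw [Fterm_eq]
  exact (intJ_integrable r (nk.1+nk.2+1)).const_mul _

lemma Fterm_norm_integral (r s t : ℕ) (nk : ℕ × ℕ) :
    ∫ x in Set.Ioo (0:ℝ) 1, ‖Fterm r s t nk x‖
      = (Nat.factorial r : ℝ) * Dterm (r+1) s t nk := by
  have h1 : ∫ x in Set.Ioo (0:ℝ) 1, ‖Fterm r s t nk x‖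
      = ∫ x in Set.Ioo (0:ℝ) 1,
          ((-Real.log x)^r * x ^ (nk.1+nk.2+1)) * (((nk.1:ℝ)+1)^s * ((nk.2:ℝ)+1)^t)⁻¹ := by
    refine MeasureTheory.setIntegral_congr_fun measurableSet_Ioo (fun x hx => ?_)
    obtain ⟨hx0, hx1⟩ := hx
    have hlog : Real.log x < 0 := Real.log_neg hx0 hx1
    unfold Fterm
    rw [Real.norm_eq_abs, abs_mul, abs_mul, abs_pow, abs_pow, abs_of_neg hlog,
      abs_of_pos hx0, abs_of_pos (by positivity)]
  rw [h1, MeasureTheory.integral_mul_const, intJ]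
  unfold Dterm
  have : ((nk.1 + nk.2 + 1 : ℕ) : ℝ) + 1 = (nk.1:ℝ) + nk.2 + 2 := by push_cast; ring
  rw [this, div_eq_mul_inv, mul_assoc, ← mul_inv]
  ring

lemma KD (r s t : ℕ) (hr : 1 ≤ r) (hst : 1 ≤ s + t) :
    Kint r s t = (-1:ℝ)^r * (Nat.factorial r : ℝ) * D (r+1) s t := by
  have hsum : Summable (fun nk => ∫ x in Set.Ioo (0:ℝ) 1, ‖Fterm r s t nk x‖) := by
    rw [show (fun nk => ∫ x in Set.Ioo (0:ℝ) 1, ‖Fterm r s t nk x‖)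
        = fun nk => (Nat.factorial r : ℝ) * Dterm (r+1) s t nk from
      funext (Fterm_norm_integral r s t)]
    exact (Dsummable (r+1) s t (by omega) hst).mul_left _
  have hswap := MeasureTheory.integral_tsum_of_summable_integral_norm
    (μ := MeasureTheory.volume.restrict (Set.Ioo (0:ℝ) 1))
    (Fterm_integrable r s t) hsum
  have h2 : ∫ x in Set.Ioo (0:ℝ) 1, Real.log x ^ r * Li s x * Li t x / x
      = ∫ x in Set.Ioo (0:ℝ) 1, ∑' nk : ℕ × ℕ, Fterm r s t nk x :=
    MeasureTheory.setIntegral_congr_fun measurableSet_Ioo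
      (fun x hx => pointwise_eq hx r s t)
  have h3 : ∀ nk : ℕ × ℕ, (∫ x in Set.Ioo (0:ℝ) 1, Fterm r s t nk x)
      = ((-1:ℝ)^r * (Nat.factorial r : ℝ)) * Dterm (r+1) s t nk := by
    intro nk
    rw [Fterm_eq, MeasureTheory.integral_const_mul, intJ]
    unfold Dterm
    have : ((nk.1 + nk.2 + 1 : ℕ) : ℝ) + 1 = (nk.1:ℝ) + nk.2 + 2 := by push_cast; ring
    rw [this, div_eq_mul_inv]
    simp only [mul_inv]
    ring
  unfold Kint
  rw [intervalIntegral.integral_of_le zero_le_one, MeasureTheory.integral_Ioc_eq_integral_Ioo,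
    h2, ← hswap]
  unfold D
  rw [← tsum_mul_left]
  congr 1
  funext nk
  exact h3 nk

noncomputable def PP : ℕ → ℕ → ℕ → ℝ
  | 0, b, c => D (c+1) b 0
  | y+1, b, c => ∑ i ∈ Finset.Icc 1 b, PP y (b - i + 1) (c + i)

lemma Icc_split (p : ℕ) : Finset.Icc 1 (p+1) = insert 1 (Finset.Icc 2 (p+1)) := by
  ext i
  simp only [Finset.mem_Icc, Finset.mem_insert]
  omega

lemma sum_shift (f : ℕ → ℝ) (p : ℕ) :
    ∑ i ∈ Finset.Icc 2 (p+1), f i = ∑ i ∈ Finset.Icc 1 p, f (i+1) := by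
  rw [show Finset.Icc 2 (p+1) = Finset.map (addRightEmbedding 1) (Finset.Icc 1 p) by
    rw [Finset.map_add_right_Icc], Finset.sum_map]
  rfl

lemma unroll (q' : ℕ) : ∀ p c : ℕ, 1 ≤ c →
    D (c+1) p (q'+1) = D (c+p+1) 0 (q'+1)
      + ∑ i ∈ Finset.Icc 1 p, D (c+i+1) (p-i+1) q' := by
  intro p
  induction p with
  | zero => intro c _; simp
  | succ p ih =>
      intro c hc
      have h1 : D (c+1) (p+1) (q'+1) = D (c+2) p (q'+1) + D (c+2) (p+1) q' :=
        Drec (c+1) p q' (by omega)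
      have h2 := ih (c+1) (by omega)
      rw [h1, show c+1+1 = c+2 from rfl] at *
      rw [h2]
      rw [Icc_split p, Finset.sum_insert (by simp), sum_shift]
      have e1 : c+1+p+1 = c+(p+1)+1 := by omega
      have e2 : ∀ i, c+(i+1)+1 = c+1+i+1 := by omega
      have e3 : ∀ i, p+1-(i+1)+1 = p-i+1 := fun i => by omega
      rw [e1]
      have e4 : ∀ i, D (c+(i+1)+1) (p+1-(i+1)+1) q' = D (c+1+i+1) (p-i+1) q' := by
        intro i; rw [e2 i, e3 i]
      rw [Finset.sum_congr rfl (fun i _ => e4 i)]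
      have : D (c+1+1) (p+1) q' = D (c+(1:ℕ)+1) (p+1-1+1) q' := by norm_num
      rw [this]
      ring

lemma master (q' : ℕ) : ∀ p c : ℕ, 1 ≤ c →
    D (c+1) p (q'+1)
      = (∑ x ∈ Finset.Icc 1 (q'+1), (cnt19 (x-1) p : ℝ) * D (c+p+x) 0 (q'+1-x+1))
        + PP (q'+1) p c := by
  induction q' with
  | zero =>
      intro p c hc
      rw [unroll 0 p c hc]
      simp only [Finset.Icc_self, Finset.sum_singleton]
      rw [show PP 1 p c = ∑ i ∈ Finset.Icc 1 p, PP 0 (p-i+1) (c+i) from rfl]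
      simp only [show ∀ i, PP 0 (p-i+1) (c+i) = D (c+i+1) (p-i+1) 0 from fun i => rfl]
      norm_num [cnt19]
  | succ q ih =>
      intro p c hc
      rw [unroll (q+1) p c hc]
      have step : ∀ i ∈ Finset.Icc 1 p,
          D (c+i+1) (p-i+1) (q+1)
            = (∑ x ∈ Finset.Icc 1 (q+1), (cnt19 (x-1) (p-i+1) : ℝ) * D (c+p+(x+1)) 0 (q+1-x+1))
              + PP (q+1) (p-i+1) (c+i) := by
        intro i hi
        have hi' := Finset.mem_Icc.mp hi
        have := ih (p-i+1) (c+i) (by omega)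
        rw [this]
        congr 1
        refine Finset.sum_congr rfl (fun x _ => ?_)
        have : c+i+(p-i+1)+x = c+p+(x+1) := by omega
        rw [this]
      rw [Finset.sum_congr rfl step]
      rw [Finset.sum_add_distrib, Finset.sum_comm]
      rw [show PP (q+1+1) p c = ∑ i ∈ Finset.Icc 1 p, PP (q+1) (p-i+1) (c+i) from rfl]
      rw [Icc_split (q+1), Finset.sum_insert (by simp), sum_shift]
      have hx1 : (cnt19 (1-1) p : ℝ) * D (c+p+1) 0 (q+1+1-1+1) = D (c+p+1) 0 (q+2) := by
        norm_num [cnt19]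
      rw [hx1]
      have hterm : ∀ x ∈ Finset.Icc 1 (q+1), (cnt19 (x+1-1) p : ℝ) * D (c+p+(x+1)) 0 (q+1+1-(x+1)+1)
          = ∑ i ∈ Finset.Icc 1 p, (cnt19 (x-1) (p-i+1) : ℝ) * D (c+p+(x+1)) 0 (q+1-x+1) := by
        intro x hx
        have hxpos := (Finset.mem_Icc.mp hx).1
        have e5 : q+1+1-(x+1)+1 = q+1-x+1 := by omega
        rw [e5]
        have : x+1-1 = (x-1)+1 := by omega
        rw [this, show cnt19 ((x-1)+1) p = ∑ i ∈ Finset.Icc 1 p, cnt19 (x-1) (p-i+1) from rfl]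
        push_cast
        rw [Finset.sum_mul]
      rw [Finset.sum_congr rfl hterm]
      ring

lemma poch_eq (m k : ℕ) :
    poch ((m:ℝ)+1) k = (Nat.factorial (m+k) : ℝ) / (Nat.factorial m : ℝ) := by
  induction k with
  | zero =>
      simp [poch, div_self (show (Nat.factorial m : ℝ) ≠ 0 by
        exact_mod_cast Nat.factorial_ne_zero m)]
  | succ k ih =>
      rw [poch, Finset.prod_range_succ, ← poch, ih]
      have : ((m:ℝ)+1+k) = ((m+k+1 : ℕ) : ℝ) := by push_cast; ring
      rw [this, show m+(k+1) = (m+k)+1 from by omega, Nat.factorial_succ]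
      push_cast
      field_simp

lemma poch_ne_zero (m k : ℕ) : poch ((m:ℝ)+1) k ≠ 0 := by
  rw [poch_eq]
  positivity

lemma nestK (B : ℕ) : ∀ y b c : ℕ, 1 ≤ b → 1 ≤ c → B = b + y + c →
    nest19 y b c (fun c' => Kint c' (B - c') 0)
      = (-1:ℝ)^c * (Nat.factorial c : ℝ) * PP y b c := by
  intro y
  induction y with
  | zero =>
      intro b c hb hc hB
      rw [show nest19 0 b c (fun c' => Kint c' (B - c') 0) = Kint c (B - c) 0 from rfl]
      rw [show B - c = b from by omega]
      rw [KD c b 0 hc (by omega)]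
      rfl
  | succ y ih =>
      intro b c hb hc hB
      rw [show nest19 (y+1) b c (fun c' => Kint c' (B - c') 0)
          = ∑ i ∈ Finset.Icc 1 b, ((-1:ℝ)^i / poch ((c:ℝ)+1) i)
              * nest19 y (b-i+1) (c+i) (fun c' => Kint c' (B - c') 0) from rfl]
      rw [show PP (y+1) b c = ∑ i ∈ Finset.Icc 1 b, PP y (b-i+1) (c+i) from rfl,
        Finset.mul_sum]
      refine Finset.sum_congr rfl (fun i hi => ?_)
      have hi' := Finset.mem_Icc.mp hi
      rw [ih (b-i+1) (c+i) (by omega) (by omega) (by omega)]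
      rw [poch_eq]
      have h1 : (Nat.factorial (c+i) : ℝ) ≠ 0 := by exact_mod_cast Nat.factorial_ne_zero _
      have h2 : (Nat.factorial c : ℝ) ≠ 0 := by exact_mod_cast Nat.factorial_ne_zero _
      have hsign : ((-1:ℝ))^i * (-1)^(c+i) = (-1)^c := by
        rw [pow_add, show (-1:ℝ)^i * ((-1:ℝ)^c * (-1:ℝ)^i) = (-1:ℝ)^c * ((-1:ℝ)^i)^2 by ring,
          ← pow_mul]
        rw [show i*2 = 2*i from by ring, pow_mul]
        norm_num
      field_simp
      have hs2 : (-1:ℝ)^(i*2) = 1 := by rw [mul_comm, pow_mul]; norm_num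
      linear_combination ((Nat.factorial (c+i) : ℝ) * (Nat.factorial c : ℝ)
        * PP y (b-i+1) (c+i)) * hsign
        + (PP y (b-i+1) (c+i) * (-1:ℝ)^c - PP y (b-i+1) (c+i) * (Nat.factorial (c+i) : ℝ)
          * (Nat.factorial c : ℝ) * (-1:ℝ)^c) * hs2

theorem stmt19 (p q m : ℕ) (hp : 1 ≤ p) (hq : 1 ≤ q) (hm : 1 ≤ m) (hpq : q ≤ p) :
    Kint m p q =
      (∑ x ∈ Finset.Icc 1 q,
        Kint (m + p + x - 1) 0 (q - x + 1)
          * ((-1 : ℝ) ^ (p + x - 1) / poch ((m : ℝ) + 1) (p + x - 1)) * (cnt19 (x - 1) p : ℝ))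
      + nest19 q p m (fun c => Kint c (p + q + m - c) 0) := by
  
  obtain ⟨q', rfl⟩ : ∃ q', q = q'+1 := ⟨q-1, by omega⟩
  rw [KD m p (q'+1) hm (by omega)]
  rw [nestK (p+(q'+1)+m) (q'+1) p m hp hm (by omega)]
  have hsum : ∀ x ∈ Finset.Icc 1 (q'+1),
      Kint (m+p+x-1) 0 ((q'+1)-x+1)
          * ((-1:ℝ)^(p+x-1) / poch ((m:ℝ)+1) (p+x-1)) * (cnt19 (x-1) p : ℝ)
        = ((-1:ℝ)^m * (Nat.factorial m : ℝ))
            * ((cnt19 (x-1) p : ℝ) * D (m+p+x) 0 ((q'+1)-x+1)) := by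
    intro x hx
    have hx1 := (Finset.mem_Icc.mp hx).1
    have hmj : m+p+x-1 = m+(p+x-1) := by omega
    rw [hmj, KD (m+(p+x-1)) 0 ((q'+1)-x+1) (by omega) (by omega),
      show m+(p+x-1)+1 = m+p+x from by omega, poch_eq]
    have h2 : (Nat.factorial m : ℝ) ≠ 0 := by exact_mod_cast Nat.factorial_ne_zero _
    have h3 : (Nat.factorial (m+(p+x-1)) : ℝ) ≠ 0 := by exact_mod_cast Nat.factorial_ne_zero _
    have hsign : ((-1:ℝ))^(m+(p+x-1)) * (-1)^(p+x-1) = (-1)^m := by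
      rw [pow_add, show (-1:ℝ)^m * (-1:ℝ)^(p+x-1) * (-1:ℝ)^(p+x-1)
        = (-1:ℝ)^m * ((-1:ℝ)^(p+x-1))^2 by ring, ← pow_mul, show (p+x-1)*2 = 2*(p+x-1) from by ring,
        pow_mul]
      norm_num
    field_simp
    have hs2 : (-1:ℝ)^((p+x-1)*2) = 1 := by rw [mul_comm, pow_mul]; norm_num
    linear_combination ((Nat.factorial (m+(p+x-1)) : ℝ) * (Nat.factorial m : ℝ)
      * (cnt19 (x-1) p : ℝ) * D (m+p+x) 0 (q'+1-x+1)) * hsign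
      + (D (m+p+x) 0 (q'+1-x+1) * (cnt19 (x-1) p : ℝ) * (-1:ℝ)^m - D (m+p+x) 0 (q'+1-x+1)
        * (cnt19 (x-1) p : ℝ) * (Nat.factorial (m+(p+x-1)) : ℝ) * (Nat.factorial m : ℝ) * (-1:ℝ)^m)
        * hs2
  rw [Finset.sum_congr rfl hsum, ← Finset.mul_sum, master q' p m hm]
  ring
end
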